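/- Let f : ℝ^d → ℝ be differentiable with L_f-Lipschitz gradient, g : ℝ^d → ℝ differentiable and ρ-weakly convex, λ > 0. For fixed x and w ∈ ℝ^d, set x⁺ = Prox_g(x − w/λ) (satisfying x⁺ − x + w/λ + ∇g(x⁺) = 0), and F = f + λg. Then F(x⁺) ≤ F(x) + (L_f/2 + ρλ/2 − λ)‖x⁺ − x‖² + ⟨w − ∇f(x), x − x⁺⟩. -/

import Mathlib

open Set

variable {E : Type*} [NormedAddCommGroup E] [InnerProductSpace ℝ E] [CompleteSpace E]

lemma lineDeriv_aux (f : E → ℝ) (hf : Differentiable ℝ f) (x v : E) (t : ℝ) :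
    HasDerivAt (fun s : ℝ => f (x + s • v)) (inner ℝ (gradient f (x + t • v)) v) t := by
  have h1 : HasFDerivAt f ((InnerProductSpace.toDual ℝ E) (gradient f (x + t • v))) (x + t • v) :=
    hasGradientAt_iff_hasFDerivAt.mp (hf (x + t • v)).hasGradientAt
  have h2 : HasDerivAt (fun s : ℝ => x + s • v) v t := by
    simpa using ((hasDerivAt_id t).smul_const v).const_add x
  rw [show inner ℝ (gradient f (x + t • v)) v = (InnerProductSpace.toDual ℝ E (gradient f (x + t • v))) v by simp]
  exact h1.comp_hasDerivAt t h2

lemma convex_deriv_le (h : ℝ → ℝ) (hc : ConvexOn ℝ Set.univ h) (m : ℝ)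
    (hd : HasDerivAt h m 0) : m ≤ h 1 - h 0 := by
  have := hc.le_slope_of_hasDerivAt (mem_univ 0) (mem_univ 1) zero_lt_one hd
  simpa [slope_def_field] using this


lemma descent_aux (Lf : ℝ) (hLf : 0 ≤ Lf) (f : E → ℝ) (hf : Differentiable ℝ f)
    (hLip : ∀ a b, ‖gradient f a - gradient f b‖ ≤ Lf * ‖a - b‖) (x v : E) :
    f (x + v) ≤ f x + inner ℝ (gradient f x) v + Lf / 2 * ‖v‖ ^ 2 := by
  set c : ℝ := inner ℝ (gradient f x) v with hc
  have hcont : ContinuousOn (fun s : ℝ => f (x + s • v)) (Icc 0 1) :=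
    (hf.continuous.comp (by continuity)).continuousOn
  have hderiv : ∀ t ∈ Ico (0:ℝ) 1, HasDerivWithinAt (fun s : ℝ => f (x + s • v))
      ((fun t => (inner ℝ (gradient f (x + t • v)) v : ℝ)) t) (Ici t) t :=
    fun t _ => (lineDeriv_aux f hf x v t).hasDerivWithinAt
  have ha : f (x + (0:ℝ) • v) ≤ f x + c * 0 + Lf * ‖v‖ ^ 2 / 2 * 0 ^ 2 := by simp
  have hBcont : ContinuousOn (fun s : ℝ => f x + c * s + Lf * ‖v‖ ^ 2 / 2 * s ^ 2) (Icc 0 1) :=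
    (by continuity : Continuous fun s : ℝ => f x + c * s + Lf * ‖v‖ ^ 2 / 2 * s ^ 2).continuousOn
  have hB' : ∀ t ∈ Ico (0:ℝ) 1, HasDerivWithinAt
      (fun s : ℝ => f x + c * s + Lf * ‖v‖ ^ 2 / 2 * s ^ 2)
      ((fun t => c + Lf * ‖v‖ ^ 2 * t) t) (Ici t) t := by
    intro t _
    have h1 : HasDerivAt (fun s : ℝ => f x + c * s) c t := by
      simpa using ((hasDerivAt_id t).const_mul c).const_add (f x)
    have h2 : HasDerivAt (fun s : ℝ => Lf * ‖v‖ ^ 2 / 2 * s ^ 2)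
        (Lf * ‖v‖ ^ 2 / 2 * (2 * t)) t := by
      simpa using (hasDerivAt_pow 2 t).const_mul (Lf * ‖v‖ ^ 2 / 2)
    have h3 := (h1.add h2).hasDerivWithinAt (s := Ici t)
    exact h3.congr_deriv (by ring)
  have hbound : ∀ t ∈ Ico (0:ℝ) 1,
      (inner ℝ (gradient f (x + t • v)) v : ℝ) ≤ c + Lf * ‖v‖ ^ 2 * t := by
    intro t ht
    have h1 : (inner ℝ (gradient f (x + t • v)) v : ℝ) - c
        = inner ℝ (gradient f (x + t • v) - gradient f x) v := by
      rw [inner_sub_left]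
    have h2 : (inner ℝ (gradient f (x + t • v) - gradient f x) v : ℝ)
        ≤ ‖gradient f (x + t • v) - gradient f x‖ * ‖v‖ := real_inner_le_norm _ _
    have h3 : ‖gradient f (x + t • v) - gradient f x‖ ≤ Lf * (t * ‖v‖) := by
      have := hLip (x + t • v) x
      simpa [norm_smul, abs_of_nonneg ht.1] using this
    nlinarith [norm_nonneg v, mul_le_mul_of_nonneg_right h3 (norm_nonneg v)]
  have key := image_le_of_deriv_right_le_deriv_boundary hcont hderiv ha hBcont hB' hbound
  have := key (Set.right_mem_Icc.mpr zero_le_one)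
  simp only [one_smul, mul_one, one_pow] at this
  linarith

theorem stmt16 {d : ℕ} (Lf ρ lam : ℝ) (hLf : 0 ≤ Lf) (hlam : 0 < lam)
    (f g : EuclideanSpace ℝ (Fin d) → ℝ)
    (hf : Differentiable ℝ f) (hg : Differentiable ℝ g)
    (hLip : ∀ a b, ‖gradient f a - gradient f b‖ ≤ Lf * ‖a - b‖)
    (hconv : ConvexOn ℝ Set.univ (fun z => g z + ρ / 2 * ‖z‖ ^ 2))
    (x w xp : EuclideanSpace ℝ (Fin d))
    (hstat : xp - x + (1 / lam) • w + gradient g xp = 0)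
    (F : EuclideanSpace ℝ (Fin d) → ℝ) (hF : ∀ z, F z = f z + lam * g z) :
    F xp ≤ F x + (Lf / 2 + ρ * lam / 2 - lam) * ‖xp - x‖ ^ 2
      + (inner ℝ (w - gradient f x) (x - xp) : ℝ) := by
  set u : EuclideanSpace ℝ (Fin d) := x - xp with hu
  -- descent lemma for f
  have hA : f xp ≤ f x + inner ℝ (gradient f x) (xp - x) + Lf / 2 * ‖xp - x‖ ^ 2 := by
    have := descent_aux Lf hLf f hf hLip x (xp - x)
    simpa using this
  -- convexity step
  set h : ℝ → ℝ := fun t => g (xp + t • u) + ρ / 2 * ‖xp + t • u‖ ^ 2 with hh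
  have hconvh : ConvexOn ℝ Set.univ h := by
    have hcomp := hconv.comp_affineMap (AffineMap.lineMap xp x)
    have heq : ((fun z => g z + ρ / 2 * ‖z‖ ^ 2) ∘ (AffineMap.lineMap xp x : ℝ →ᵃ[ℝ] EuclideanSpace ℝ (Fin d))) = h := by
      funext t
      have : (AffineMap.lineMap xp x : ℝ →ᵃ[ℝ] EuclideanSpace ℝ (Fin d)) t = xp + t • u := by
        simp [AffineMap.lineMap_apply, hu]
        module
      simp [Function.comp, this, hh]
    rw [heq] at hcomp
    simpa using hcomp
  have hd1 : HasDerivAt (fun t : ℝ => g (xp + t • u)) (inner ℝ (gradient g xp) u) 0 := by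
    have := lineDeriv_aux g hg xp u 0
    simpa using this
  have hd2 : HasDerivAt (fun t : ℝ => ρ / 2 * ‖xp + t • u‖ ^ 2)
      (ρ * inner ℝ xp u) 0 := by
    have e : (fun t : ℝ => ρ / 2 * ‖xp + t • u‖ ^ 2)
        = fun t => (ρ / 2 * ‖xp‖ ^ 2 + (ρ * inner ℝ xp u) * t) + (ρ / 2 * ‖u‖ ^ 2) * t ^ 2 := by
      funext t
      rw [norm_add_sq_real, real_inner_smul_right, norm_smul]
      simp [mul_pow]
      ring
    rw [e]
    have h1 : HasDerivAt (fun t : ℝ => ρ / 2 * ‖xp‖ ^ 2 + (ρ * inner ℝ xp u) * t)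
        (ρ * inner ℝ xp u) 0 := by
      simpa using ((hasDerivAt_id (0:ℝ)).const_mul (ρ * (inner ℝ xp u : ℝ))).const_add (ρ / 2 * ‖xp‖ ^ 2)
    have h2 : HasDerivAt (fun t : ℝ => (ρ / 2 * ‖u‖ ^ 2) * t ^ 2)
        ((ρ / 2 * ‖u‖ ^ 2) * (2 * 0 ^ 1)) 0 := by
      simpa using (hasDerivAt_pow 2 (0:ℝ)).const_mul (ρ / 2 * ‖u‖ ^ 2)
    have := h1.add h2
    exact this.congr_deriv (by simp)
  have hdh : HasDerivAt h ((inner ℝ (gradient g xp) u : ℝ) + ρ * inner ℝ xp u) 0 := hd1.add hd2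
  have hB := convex_deriv_le h hconvh _ hdh
  have hh1 : h 1 = g x + ρ / 2 * ‖x‖ ^ 2 := by simp [hh, hu]
  have hh0 : h 0 = g xp + ρ / 2 * ‖xp‖ ^ 2 := by simp [hh]
  rw [hh1, hh0] at hB
  -- stationarity
  have hgrad : gradient g xp = u - (1 / lam) • w := by
    rw [hu]
    linear_combination (norm := module) hstat
  have hinner1 : (inner ℝ (gradient g xp) u : ℝ) = ‖u‖ ^ 2 - (1 / lam) * inner ℝ w u := by
    rw [hgrad, inner_sub_left, real_inner_smul_left, real_inner_self_eq_norm_sq]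
  -- algebraic identities
  have e1 : ‖u‖ = ‖xp - x‖ := by rw [hu, norm_sub_rev]
  have e2 : ‖x‖ ^ 2 = ‖xp‖ ^ 2 + 2 * inner ℝ xp u + ‖u‖ ^ 2 := by
    have hx : x = xp + u := by rw [hu]; abel
    rw [hx, norm_add_sq_real]
  have e3 : (inner ℝ (w - gradient f x) (x - xp) : ℝ)
      = inner ℝ w u - inner ℝ (gradient f x) u := by
    rw [← hu, inner_sub_left]
  have e4 : (inner ℝ (gradient f x) (xp - x) : ℝ) = -inner ℝ (gradient f x) u := by
    rw [show xp - x = -u by rw [hu]; abel, inner_neg_right]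
  -- combine
  have hBlam := mul_le_mul_of_nonneg_left hB hlam.le
  rw [hF x, hF xp, e3]
  rw [e4] at hA
  have hN : ‖u‖ ^ 2 = ‖xp - x‖ ^ 2 := by rw [e1]
  have hinner2 : lam * (inner ℝ (gradient g xp) u : ℝ) = lam * ‖u‖ ^ 2 - inner ℝ w u := by
    rw [hinner1, mul_sub, ← mul_assoc, mul_one_div_cancel hlam.ne', one_mul]
  have e2s : lam * ρ / 2 * ‖x‖ ^ 2
      = lam * ρ / 2 * ‖xp‖ ^ 2 + lam * ρ * inner ℝ xp u + lam * ρ / 2 * ‖u‖ ^ 2 := by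
    linear_combination (lam * ρ / 2) * e2
  clear_value u h
  linarith [hA, hBlam, hinner2, e2s,
    (by linear_combination lam * hN : lam * ‖u‖ ^ 2 = lam * ‖xp - x‖ ^ 2),
    (by linear_combination lam * ρ / 2 * hN :
      lam * ρ / 2 * ‖u‖ ^ 2 = lam * ρ / 2 * ‖xp - x‖ ^ 2)]
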